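/- Fix φ : P → ℤ₂ and a P-space X. On the set H¹_P(X; ℤ₂) × H²_P(X; φ𝕋), define (c, σ) + (c', σ') := (c + c', σ + σ' + ε(c, c')) where ε(c, c')(p, q, x) = (−1)^{c'(p,x)·c(q,x)}. Then ε(c, c') is a 2-cocycle, and this addition is associative and has (0,0) as identity element, so that the set of twists forms a monoid (indeed a group). -/

import Mathlib

/-- The element `-1` of the circle group `𝕋`. -/
noncomputable def negOne : Circle :=
  ⟨-1, by simp [Submonoid.unitSphere, mem_sphere_zero_iff_norm]⟩

/-- `(-1)^a ∈ 𝕋` for `a : ℤ₂`. -/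
noncomputable def signChar (a : ZMod 2) : Circle := if a = 0 then 1 else negOne

lemma negOne_mul_negOne : negOne * negOne = 1 := by
  ext
  rw [Circle.coe_mul]
  show (-1 : ℂ) * (-1) = ((1 : Circle) : ℂ)
  simp

lemma signChar_add (a b : ZMod 2) : signChar (a + b) = signChar a * signChar b := by
  have h : ∀ x : ZMod 2, x = 0 ∨ x = 1 := by decide
  rcases h a with ha | ha <;> rcases h b with hb | hb <;>
    simp [ha, hb, signChar, negOne_mul_negOne, (by decide : (1 + 1 : ZMod 2) = 0)]

lemma signChar_sq (a : ZMod 2) : signChar a * signChar a = 1 := by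
  rw [← signChar_add]
  have h : ∀ x : ZMod 2, x + x = 0 := by decide
  simp [h, signChar]

lemma signChar_inv (a : ZMod 2) : (signChar a)⁻¹ = signChar a :=
  inv_eq_of_mul_eq_one_right (signChar_sq a)

/-- Fix `φ : P → ℤ₂` and a `P`-space `X`.  On pairs `(c, σ)` consisting of a `1`-cocycle
`c ∈ H¹_P(X; ℤ₂)` (pulled back from `P`) and a `φ`-twisted `2`-cocycle
`σ ∈ H²_P(X; φ𝕋)`, define `(c, σ) + (c', σ') := (c + c', σ·σ'·ε(c, c'))` where
`ε(c, c')(p, q, x) = (−1)^{c'(p)·c(q)}`.  Then `ε(c, c')` is again a (φ-twisted)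
`2`-cocycle, the addition is associative with identity `(0, 1)`, and inverses exist,
so the set of twists forms a monoid (indeed a group). -/
theorem stmt_6 {P X : Type*} [Group P] [Finite P] [MulAction P X]
    (φ : P → ZMod 2) (hφ : ∀ p q : P, φ (p * q) = φ p + φ q)
    -- the φ-twisted action of `P` on the coefficients `𝕋`
    (tw : P → Circle → Circle) (htw : ∀ p z, tw p z = if φ p = 0 then z else z⁻¹)
    -- 1-cocycles (pulled back from `P`) and φ-twisted groupoid 2-cocycles
    (Coc1 : (P → ZMod 2) → Prop)
    (hCoc1 : ∀ c, Coc1 c ↔ ∀ p q : P, c (p * q) = c p + c q)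
    (Coc2 : (P → P → X → Circle) → Prop)
    (hCoc2 : ∀ σ, Coc2 σ ↔ ∀ (p q r : P) (x : X),
      σ p q (r • x) * σ (p * q) r x = tw p (σ q r x) * σ p (q * r) x)
    -- the correction cocycle ε
    (ε : (P → ZMod 2) → (P → ZMod 2) → P → P → X → Circle)
    (hε : ∀ c c' p q x, ε c c' p q x = signChar (c' p * c q)) :
    -- (1) ε(c,c') is a 2-cocycle
    (∀ c c', Coc1 c → Coc1 c' → Coc2 (ε c c')) ∧
    -- (2) the sum is associative (strictly, at the level of cocycles)
    (∀ c c' c'', Coc1 c → Coc1 c' → Coc1 c'' →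
      ((c + c') + c'' = c + (c' + c'')) ∧
      ∀ (σ σ' σ'' : P → P → X → Circle) (p q : P) (x : X),
        (σ p q x * σ' p q x * ε c c' p q x) * σ'' p q x * ε (c + c') c'' p q x
          = σ p q x * (σ' p q x * σ'' p q x * ε c' c'' p q x) * ε c (c' + c'') p q x) ∧
    -- (3) (0, 1) is an identity element
    (∀ (c : P → ZMod 2) (σ : P → P → X → Circle) (p q : P) (x : X),
      (σ p q x * 1 * ε c 0 p q x = σ p q x) ∧
      (1 * σ p q x * ε 0 c p q x = σ p q x)) ∧
    -- (4) inverses exist, so the twists form a group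
    (∀ c σ, Coc1 c → Coc2 σ → ∃ c' σ', Coc1 c' ∧ Coc2 σ' ∧ c + c' = 0 ∧
      ∀ (p q : P) (x : X), σ p q x * σ' p q x * ε c c' p q x = 1) := by
  have h2 : ∀ x : ZMod 2, x + x = 0 := by decide
  have htw_sign : ∀ (p : P) (a : ZMod 2), tw p (signChar a) = signChar a := by
    intro p a
    rw [htw, signChar_inv]
    exact ite_self _
  have htw_inv : ∀ (p : P) (z : Circle), tw p z⁻¹ = (tw p z)⁻¹ := by
    intro p z; rw [htw, htw]; split_ifs <;> rfl
  have htw_mul : ∀ (p : P) (z w : Circle), tw p (z * w) = tw p z * tw p w := by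
    intro p z w; rw [htw, htw, htw]; split_ifs <;> simp [mul_inv, mul_comm]
  have part1 : ∀ c c', Coc1 c → Coc1 c' → Coc2 (ε c c') := by
    intro c c' hc hc'
    rw [hCoc1] at hc hc'
    rw [hCoc2]
    intro p q r x
    rw [hε, hε, hε, hε, htw_sign, hc' p q, hc q r, ← signChar_add, ← signChar_add]
    congr 1
    ring
  refine ⟨part1, ?_, ?_, ?_⟩
  · intro c c' c'' hc hc' hc''
    refine ⟨add_assoc c c' c'', ?_⟩
    intro σ σ' σ'' p q x
    have key : signChar (c' p * c q) * signChar (c'' p * (c q + c' q))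
        = signChar (c'' p * c' q) * signChar ((c' p + c'' p) * c q) := by
      rw [← signChar_add, ← signChar_add]
      congr 1
      ring
    simp only [hε, Pi.add_apply]
    calc σ p q x * σ' p q x * signChar (c' p * c q) * σ'' p q x *
          signChar (c'' p * (c q + c' q))
        = σ p q x * σ' p q x * σ'' p q x *
            (signChar (c' p * c q) * signChar (c'' p * (c q + c' q))) := by ac_rfl
      _ = σ p q x * σ' p q x * σ'' p q x *
            (signChar (c'' p * c' q) * signChar ((c' p + c'' p) * c q)) := by rw [key]
      _ = σ p q x * (σ' p q x * σ'' p q x * signChar (c'' p * c' q)) *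
            signChar ((c' p + c'' p) * c q) := by ac_rfl
  · intro c σ p q x
    constructor <;> simp [hε, signChar]
  · intro c σ hc hσ
    refine ⟨c, fun p q x => (σ p q x * ε c c p q x)⁻¹, hc, ?_, ?_, ?_⟩
    · have hεc := part1 c c hc hc
      rw [hCoc2] at hσ hεc ⊢
      intro p q r x
      have h1 : (σ p q (r • x))⁻¹ * (σ (p * q) r x)⁻¹
          = (tw p (σ q r x))⁻¹ * (σ p (q * r) x)⁻¹ := by
        rw [← mul_inv, ← mul_inv, hσ p q r x]
      have h2' : (ε c c p q (r • x))⁻¹ * (ε c c (p * q) r x)⁻¹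
          = (tw p (ε c c q r x))⁻¹ * (ε c c p (q * r) x)⁻¹ := by
        rw [← mul_inv, ← mul_inv, hεc p q r x]
      simp only [mul_inv, htw_mul, htw_inv]
      rw [mul_mul_mul_comm, h1, h2', mul_mul_mul_comm]
    · funext p
      simp [h2]
    · intro p q x
      show σ p q x * (σ p q x * ε c c p q x)⁻¹ * ε c c p q x = 1
      rw [mul_inv, ← mul_assoc, mul_inv_cancel, one_mul, inv_mul_cancel]
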